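/- For n ≥ 4 and any admissible peak set S, there exist σ, ρ ∈ P(S;n) with d_H(σ,ρ) = n; i.e., the maximum Hamming distance between permutations in P(S;n) is n. -/
import Mathlib


/-- Hamming distance on permutations of `Fin n`. -/
def dH (n : ℕ) (σ ρ : Equiv.Perm (Fin n)) : ℕ :=
  (Finset.univ.filter (fun i => σ i ≠ ρ i)).card

/-- ℓ∞ distance on permutations of `Fin n`. -/
def dL (n : ℕ) (σ ρ : Equiv.Perm (Fin n)) : ℕ :=
  Finset.univ.sup (fun i => (((σ i : ℕ) : ℤ) - ((ρ i : ℕ) : ℤ)).natAbs)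

/-- Kendall-Tau distance: number of deranged pairs. -/
def dK (n : ℕ) (σ ρ : Equiv.Perm (Fin n)) : ℕ :=
  (Finset.univ.filter (fun p : Fin n × Fin n =>
    p.1 < p.2 ∧ (((σ p.1 : ℕ) : ℤ) - ((σ p.2 : ℕ) : ℤ)) *
      (((ρ p.1 : ℕ) : ℤ) - ((ρ p.2 : ℕ) : ℤ)) < 0)).card

/-- `τ` is an adjacent transposition `(i, i+1)`. -/
def IsAdjTrans (n : ℕ) (τ : Equiv.Perm (Fin n)) : Prop :=
  ∃ (i : ℕ) (h : i + 1 < n), τ = Equiv.swap ⟨i, Nat.lt_of_succ_lt h⟩ ⟨i + 1, h⟩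

/-- Minimal number of adjacent transpositions transforming `σ` into `ρ`
(acting by left multiplication). -/
noncomputable def dK' (n : ℕ) (σ ρ : Equiv.Perm (Fin n)) : ℕ :=
  sInf {m | ∃ L : List (Equiv.Perm (Fin n)), L.length = m ∧
    (∀ τ ∈ L, IsAdjTrans n τ) ∧ L.prod * σ = ρ}

/-- The peak set of `σ`, with 1-based positions: `j ∈ {2, …, n-1}` is a peak if
`σ_{j-1} < σ_j > σ_{j+1}` in one-line notation (so 0-based indices `j-2, j-1, j`). -/
def peaks (n : ℕ) (σ : Equiv.Perm (Fin n)) : Finset ℕ :=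
  (Finset.Icc 2 (n - 1)).filter (fun j =>
    ∃ (h1 : j - 2 < n) (h2 : j - 1 < n) (h3 : j < n),
      σ ⟨j - 2, h1⟩ < σ ⟨j - 1, h2⟩ ∧ σ ⟨j, h3⟩ < σ ⟨j - 1, h2⟩)

namespace MaxHammingAux

def crk (S : Finset ℕ) (i : ℕ) : ℕ := ((Finset.range i).filter (fun j => j + 1 ∉ S)).card
def prk (S : Finset ℕ) (i : ℕ) : ℕ := ((Finset.range i).filter (fun j => j + 1 ∈ S)).card

lemma crk_zero (S : Finset ℕ) : crk S 0 = 0 := by simp [crk]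
lemma prk_zero (S : Finset ℕ) : prk S 0 = 0 := by simp [prk]

lemma crk_succ_mem {S : Finset ℕ} {i : ℕ} (h : i + 1 ∈ S) : crk S (i+1) = crk S i := by
  rw [crk, crk, Finset.range_add_one, Finset.filter_insert, if_neg (by simp [h])]

lemma crk_succ_not {S : Finset ℕ} {i : ℕ} (h : i + 1 ∉ S) : crk S (i+1) = crk S i + 1 := by
  rw [crk, crk, Finset.range_add_one, Finset.filter_insert, if_pos h,
    Finset.card_insert_of_notMem (by simp)]

lemma prk_succ_mem {S : Finset ℕ} {i : ℕ} (h : i + 1 ∈ S) : prk S (i+1) = prk S i + 1 := by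
  rw [prk, prk, Finset.range_add_one, Finset.filter_insert, if_pos h,
    Finset.card_insert_of_notMem (by simp)]

lemma prk_succ_not {S : Finset ℕ} {i : ℕ} (h : i + 1 ∉ S) : prk S (i+1) = prk S i := by
  rw [prk, prk, Finset.range_add_one, Finset.filter_insert, if_neg (by simp [h])]

lemma crk_add_prk (S : Finset ℕ) : ∀ i, crk S i + prk S i = i := by
  intro i
  induction i with
  | zero => simp [crk_zero, prk_zero]
  | succ i ih =>
    by_cases h : i + 1 ∈ S
    · rw [crk_succ_mem h, prk_succ_mem h]; omega
    · rw [crk_succ_not h, prk_succ_not h]; omega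

lemma crk_mono (S : Finset ℕ) {i j : ℕ} (h : i ≤ j) : crk S i ≤ crk S j :=
  Finset.card_le_card (Finset.filter_subset_filter _ (Finset.range_subset_range.2 h))

lemma prk_mono (S : Finset ℕ) {i j : ℕ} (h : i ≤ j) : prk S i ≤ prk S j :=
  Finset.card_le_card (Finset.filter_subset_filter _ (Finset.range_subset_range.2 h))

lemma crk_inj (S : Finset ℕ) {i j : ℕ} (hi : i + 1 ∉ S) (hj : j + 1 ∉ S)
    (h : crk S i = crk S j) : i = j := by
  rcases lt_trichotomy i j with hlt | he | hlt
  · have h1 := crk_succ_not hi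
    have h2 := crk_mono S (show i + 1 ≤ j by omega)
    omega
  · exact he
  · have h1 := crk_succ_not hj
    have h2 := crk_mono S (show j + 1 ≤ i by omega)
    omega

lemma prk_inj (S : Finset ℕ) {i j : ℕ} (hi : i + 1 ∈ S) (hj : j + 1 ∈ S)
    (h : prk S i = prk S j) : i = j := by
  rcases lt_trichotomy i j with hlt | he | hlt
  · have h1 := prk_succ_mem hi
    have h2 := prk_mono S (show i + 1 ≤ j by omega)
    omega
  · exact he
  · have h1 := prk_succ_mem hj
    have h2 := prk_mono S (show j + 1 ≤ i by omega)
    omega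

noncomputable def mkPerm (n : ℕ) (f : ℕ → ℕ) (hfn : ∀ i, i < n → f i < n)
    (hinj : ∀ i j, i < n → j < n → f i = f j → i = j) : Equiv.Perm (Fin n) :=
  Equiv.ofBijective (fun x => ⟨f x.1, hfn x.1 x.2⟩)
    (Finite.injective_iff_bijective.mp
      (fun a b h => Fin.ext (hinj a.1 b.1 a.2 b.2 (congrArg Fin.val h))))

lemma mkPerm_lt (n : ℕ) (f : ℕ → ℕ) (hfn : ∀ i, i < n → f i < n)
    (hinj : ∀ i j, i < n → j < n → f i = f j → i = j) {a b : ℕ} (ha : a < n) (hb : b < n) :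
    mkPerm n f hfn hinj ⟨a, ha⟩ < mkPerm n f hfn hinj ⟨b, hb⟩ ↔ f a < f b := Iff.rfl

lemma peaks_mkPerm (n : ℕ) (S : Finset ℕ) (f : ℕ → ℕ) (hfn : ∀ i, i < n → f i < n)
    (hinj : ∀ i j, i < n → j < n → f i = f j → i = j)
    (hSub : S ⊆ Finset.Icc 2 (n - 1))
    (hiff : ∀ i, i + 2 ≤ n - 1 →
      ((f i < f (i + 1) ∧ f (i + 2) < f (i + 1)) ↔ i + 2 ∈ S)) :
    peaks n (mkPerm n f hfn hinj) = S := by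
  ext j
  simp only [peaks, Finset.mem_filter, Finset.mem_Icc]
  constructor
  · rintro ⟨⟨hj2, hj1⟩, h1, h2, h3, ha, hb⟩
    rw [mkPerm_lt] at ha hb
    have e1 : j - 2 + 1 = j - 1 := by omega
    have e2 : j - 2 + 2 = j := by omega
    have := (hiff (j - 2) (by omega)).mp (by rw [e1, e2]; exact ⟨ha, hb⟩)
    rwa [e2] at this
  · intro hj
    have hj' := hSub hj
    rw [Finset.mem_Icc] at hj'
    obtain ⟨hj2, hj1⟩ := hj'
    have hn3 : 3 ≤ n := by omega
    have e1 : j - 2 + 1 = j - 1 := by omega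
    have e2 : j - 2 + 2 = j := by omega
    have := (hiff (j - 2) (by omega)).mpr (by rwa [e2])
    rw [e1, e2] at this
    exact ⟨⟨hj2, hj1⟩, by omega, by omega, by omega,
      (mkPerm_lt n f hfn hinj _ _).mpr this.1, (mkPerm_lt n f hfn hinj _ _).mpr this.2⟩

/-- generic "ρ": decreasing chain, rotated top values at peaks -/
def fA (n : ℕ) (S : Finset ℕ) (i : ℕ) : ℕ :=
  if i + 1 ∈ S then crk S n + ((prk S i + 1) % prk S n) else crk S n - 1 - crk S i

/-- generic "σ": valley chain (decreasing then last one big), increasing top values -/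
def fB (n : ℕ) (S : Finset ℕ) (i : ℕ) : ℕ :=
  if i + 1 ∈ S then crk S n + prk S i
  else if crk S i = crk S n - 1 then crk S n - 1 else crk S n - 2 - crk S i

/-- `k = 1`, peak ≤ n-2 case -/
def fC (n : ℕ) (S : Finset ℕ) (i : ℕ) : ℕ :=
  if i + 1 ∈ S then n - 2
  else if crk S i = crk S n - 1 then n - 1 else crk S n - 2 - crk S i

/-- `k = 1`, peak = n-1 case -/
def fD (n : ℕ) (S : Finset ℕ) (i : ℕ) : ℕ :=
  if i + 1 ∈ S then n - 2
  else if crk S i = 0 then n - 1 else crk S n - 1 - crk S i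

end MaxHammingAux
open MaxHammingAux
/-- for `n ≥ 4`, the maximum Hamming distance on `P(S;n)` is `n`. -/
theorem max_hamming_on_peak_class (n : ℕ) (hn : 4 ≤ n) (S : Finset ℕ)
    (hS : ∃ σ : Equiv.Perm (Fin n), peaks n σ = S) :
    IsGreatest {d | ∃ σ ρ : Equiv.Perm (Fin n),
        peaks n σ = S ∧ peaks n ρ = S ∧ d = dH n σ ρ} n := by
  classical
  obtain ⟨σ0, hσ0⟩ := hS
  have hSub : S ⊆ Finset.Icc 2 (n - 1) := by
    rw [← hσ0]; exact Finset.filter_subset _ _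
  have hmem : ∀ j ∈ S, 2 ≤ j ∧ j ≤ n - 1 := fun j hj => Finset.mem_Icc.mp (hSub hj)
  have hAdj : ∀ j, j ∈ S → j + 1 ∉ S := by
    intro j hj hj1
    have h2j := (hmem j hj).1
    rw [← hσ0] at hj hj1
    obtain ⟨-, h1, h2, h3, ha, hb⟩ := Finset.mem_filter.mp hj
    obtain ⟨-, h1', h2', h3', ha', hb'⟩ := Finset.mem_filter.mp hj1
    have k1 : (⟨j + 1 - 2, h1'⟩ : Fin n) = ⟨j - 1, h2⟩ :=
      Fin.ext (show j + 1 - 2 = j - 1 by omega)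
    have k2 : (⟨j + 1 - 1, h2'⟩ : Fin n) = ⟨j, h3⟩ :=
      Fin.ext (show j + 1 - 1 = j by omega)
    rw [k1, k2] at ha'
    exact absurd ha' (not_lt.mpr (le_of_lt hb))
  have h1S : (1 : ℕ) ∉ S := fun h => by have := hmem 1 h; omega
  have hnS : ∀ jj, n ≤ jj → jj ∉ S := fun jj hjj h => by have := hmem jj h; omega
  have hcr1 : crk S 1 = 1 := by
    have h0 : (0:ℕ) + 1 ∉ S := by simpa using h1S
    have h1 : crk S 1 = crk S 0 + 1 := crk_succ_not h0
    have h2 := crk_zero S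
    omega
  have hcrn : crk S (n - 1) + 1 = crk S n := by
    have e : n - 1 + 1 = n := by omega
    have h1 : (n - 1) + 1 ∉ S := by rw [e]; exact hnS n le_rfl
    have h2 := crk_succ_not h1
    rw [e] at h2
    omega
  have hm2 : 2 ≤ crk S n := by
    have := crk_mono S (show 1 ≤ n - 1 by omega)
    omega
  have hmk : crk S n + prk S n = n := crk_add_prk S n
  have hcr_le : ∀ i, i < n → crk S i ≤ crk S n - 1 := by
    intro i hi
    have := crk_mono S (show i ≤ n - 1 by omega)
    omega
  have hcr_pos : ∀ i, 1 ≤ i → 1 ≤ crk S i := by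
    intro i hi
    have := crk_mono S hi
    omega
  have hcand : ∀ i, i + 1 ≤ n - 1 → i + 1 ∉ S → crk S i ≤ crk S n - 2 := by
    intro i hi hP
    have h1 := crk_succ_not hP
    have h2 := crk_mono S (show i + 1 ≤ n - 1 by omega)
    omega
  have hpr_lt : ∀ i, i + 1 ∈ S → prk S i < prk S n := by
    intro i hP
    have h1 := prk_succ_mem hP
    have h2 := prk_mono S (show i + 1 ≤ n from by have := hmem _ hP; omega)
    omega
  have main : ∀ (f g : ℕ → ℕ) (hf : ∀ i, i < n → f i < n) (hg : ∀ i, i < n → g i < n)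
      (hfi : ∀ i j, i < n → j < n → f i = f j → i = j)
      (hgi : ∀ i j, i < n → j < n → g i = g j → i = j),
      (∀ i, i + 2 ≤ n - 1 → ((f i < f (i+1) ∧ f (i+2) < f (i+1)) ↔ i + 2 ∈ S)) →
      (∀ i, i + 2 ≤ n - 1 → ((g i < g (i+1) ∧ g (i+2) < g (i+1)) ↔ i + 2 ∈ S)) →
      (∀ i, i < n → f i ≠ g i) →
      n ∈ {d | ∃ σ ρ : Equiv.Perm (Fin n),
        peaks n σ = S ∧ peaks n ρ = S ∧ d = dH n σ ρ} := by
    intro f g hf hg hfi hgi hfp hgp hne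
    refine ⟨mkPerm n f hf hfi, mkPerm n g hg hgi,
      peaks_mkPerm n S f hf hfi hSub hfp, peaks_mkPerm n S g hg hgi hSub hgp, ?_⟩
    have hfil : Finset.univ.filter
        (fun i => mkPerm n f hf hfi i ≠ mkPerm n g hg hgi i) = Finset.univ := by
      apply Finset.filter_true_of_mem
      intro x _ h
      exact hne x.1 x.2 (congrArg Fin.val h)
    rw [dH, hfil, Finset.card_univ, Fintype.card_fin]
  constructor
  · -- membership
    -- facts about fA
    have hfnA : ∀ i, i < n → fA n S i < n := by
      intro i hi
      simp only [fA]
      by_cases hP : i + 1 ∈ S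
      · rw [if_pos hP]
        have h1 := hpr_lt i hP
        have h2 : (prk S i + 1) % prk S n < prk S n := Nat.mod_lt _ (by omega)
        omega
      · rw [if_neg hP]; omega
    have hinjA : ∀ i j, i < n → j < n → fA n S i = fA n S j → i = j := by
      intro i j hi hj he
      simp only [fA] at he
      by_cases hPi : i + 1 ∈ S <;> by_cases hPj : j + 1 ∈ S
      · rw [if_pos hPi, if_pos hPj] at he
        have hki := hpr_lt i hPi
        have hkj := hpr_lt j hPj
        have hmi : (prk S i + 1) % prk S n = prk S i + 1 ∨
            ((prk S i + 1) % prk S n = 0 ∧ prk S i + 1 = prk S n) := by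
          rcases eq_or_ne (prk S i + 1) (prk S n) with h | h
          · right; exact ⟨by rw [h, Nat.mod_self], h⟩
          · left; exact Nat.mod_eq_of_lt (by omega)
        have hmj : (prk S j + 1) % prk S n = prk S j + 1 ∨
            ((prk S j + 1) % prk S n = 0 ∧ prk S j + 1 = prk S n) := by
          rcases eq_or_ne (prk S j + 1) (prk S n) with h | h
          · right; exact ⟨by rw [h, Nat.mod_self], h⟩
          · left; exact Nat.mod_eq_of_lt (by omega)
        refine prk_inj S hPi hPj ?_
        rcases hmi with h | h <;> rcases hmj with h' | h' <;> omega
      · rw [if_pos hPi, if_neg hPj] at he; omega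
      · rw [if_neg hPi, if_pos hPj] at he; omega
      · rw [if_neg hPi, if_neg hPj] at he
        have h1 := hcr_le i hi
        have h2 := hcr_le j hj
        exact crk_inj S hPi hPj (by omega)
    have hiffA : ∀ i, i + 2 ≤ n - 1 →
        ((fA n S i < fA n S (i+1) ∧ fA n S (i+2) < fA n S (i+1)) ↔ i + 2 ∈ S) := by
      intro i hi
      have e1 : i + 1 + 1 = i + 2 := rfl
      have e2 : i + 2 + 1 = i + 3 := rfl
      by_cases hP : i + 2 ∈ S
      · simp only [hP, iff_true]
        have hPi : i + 1 ∉ S := fun h => hAdj (i+1) h hP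
        have hPi2 : i + 3 ∉ S := hAdj (i+2) hP
        simp only [fA, e1, e2, if_pos hP, if_neg hPi, if_neg hPi2]
        omega
      · simp only [hP, iff_false]
        rintro ⟨hlt, -⟩
        have hrc1 : 1 ≤ crk S (i+1) := hcr_pos (i+1) (by omega)
        have hrc2 : crk S (i+1) ≤ crk S n - 2 := hcand (i+1) (by omega) hP
        simp only [fA, e1, if_neg hP] at hlt
        by_cases hPi : i + 1 ∈ S
        · rw [if_pos hPi] at hlt; omega
        · rw [if_neg hPi] at hlt
          have := crk_succ_not hPi
          omega
    -- facts about fB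
    have hfnB : ∀ i, i < n → fB n S i < n := by
      intro i hi
      simp only [fB]
      by_cases hP : i + 1 ∈ S
      · rw [if_pos hP]
        have h1 := hpr_lt i hP
        omega
      · rw [if_neg hP]
        by_cases h : crk S i = crk S n - 1 <;> simp only [h, if_true, if_false] <;> omega
    have hinjB : ∀ i j, i < n → j < n → fB n S i = fB n S j → i = j := by
      intro i j hi hj he
      simp only [fB] at he
      by_cases hPi : i + 1 ∈ S <;> by_cases hPj : j + 1 ∈ S
      · rw [if_pos hPi, if_pos hPj] at he
        exact prk_inj S hPi hPj (by omega)
      · rw [if_pos hPi, if_neg hPj] at he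
        by_cases h : crk S j = crk S n - 1
        · rw [if_pos h] at he; omega
        · rw [if_neg h] at he; omega
      · rw [if_neg hPi, if_pos hPj] at he
        by_cases h : crk S i = crk S n - 1
        · rw [if_pos h] at he; omega
        · rw [if_neg h] at he; omega
      · rw [if_neg hPi, if_neg hPj] at he
        have h1 := hcr_le i hi
        have h2 := hcr_le j hj
        refine crk_inj S hPi hPj ?_
        by_cases ha : crk S i = crk S n - 1 <;> by_cases hb : crk S j = crk S n - 1 <;>
          simp only [ha, hb, if_true, if_false] at he <;> omega
    have hiffB : ∀ i, i + 2 ≤ n - 1 →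
        ((fB n S i < fB n S (i+1) ∧ fB n S (i+2) < fB n S (i+1)) ↔ i + 2 ∈ S) := by
      intro i hi
      by_cases hP : i + 2 ∈ S
      · simp only [hP, iff_true]
        have hPi : i + 1 ∉ S := fun h => hAdj (i+1) h hP
        have hPi2 : i + 3 ∉ S := hAdj (i+2) hP
        have hb1 : crk S i ≤ crk S n - 1 := hcr_le i (by omega)
        have hb2 : crk S (i+2) ≤ crk S n - 1 := hcr_le (i+2) (by omega)
        simp only [fB, show i+1+1 = i+2 from rfl, show i+2+1 = i+3 from rfl,
          if_pos hP, if_neg hPi, if_neg hPi2]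
        by_cases ha : crk S i = crk S n - 1 <;> by_cases hb : crk S (i+2) = crk S n - 1 <;>
          simp only [ha, hb, if_true, if_false] <;> omega
      · simp only [hP, iff_false]
        rintro ⟨hlt, -⟩
        have hrc1 : 1 ≤ crk S (i+1) := hcr_pos (i+1) (by omega)
        have hrc2 : crk S (i+1) ≤ crk S n - 2 := hcand (i+1) (by omega) hP
        simp only [fB, show i+1+1 = i+2 from rfl, if_neg hP] at hlt
        rw [if_neg (by omega : ¬ crk S (i+1) = crk S n - 1)] at hlt
        by_cases hPi : i + 1 ∈ S
        · rw [if_pos hPi] at hlt; omega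
        · rw [if_neg hPi] at hlt
          have hs := crk_succ_not hPi
          rw [if_neg (by omega : ¬ crk S i = crk S n - 1)] at hlt
          omega
    rcases eq_or_ne (prk S n) 1 with hk1 | hk1
    · by_cases hln : (n - 1) ∈ S
      · -- S = {n-1} : use pair (B, D)
        have hOnly : ∀ j ∈ S, j = n - 1 := by
          intro j hj
          by_contra hne
          have hjm := hmem j hj
          have hsub2 : ({j - 1, n - 2} : Finset ℕ) ⊆
              (Finset.range n).filter (fun x => x + 1 ∈ S) := by
            intro x hx
            rcases Finset.mem_insert.mp hx with rfl | hx
            · refine Finset.mem_filter.mpr ⟨Finset.mem_range.mpr (by omega), ?_⟩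
              rw [show j - 1 + 1 = j by omega]; exact hj
            · rw [Finset.mem_singleton] at hx
              subst hx
              refine Finset.mem_filter.mpr ⟨Finset.mem_range.mpr (by omega), ?_⟩
              rw [show n - 2 + 1 = n - 1 by omega]; exact hln
          have hcard := Finset.card_le_card hsub2
          rw [Finset.card_pair (by omega)] at hcard
          have : prk S n = ((Finset.range n).filter (fun x => x + 1 ∈ S)).card := rfl
          omega
        have hfnD : ∀ i, i < n → fD n S i < n := by
          intro i hi
          simp only [fD]
          by_cases hP : i + 1 ∈ S
          · rw [if_pos hP]; omega
          · rw [if_neg hP]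
            by_cases h : crk S i = 0 <;> simp only [h, if_true, if_false] <;> omega
        have hinjD : ∀ i j, i < n → j < n → fD n S i = fD n S j → i = j := by
          intro i j hi hj he
          simp only [fD] at he
          by_cases hPi : i + 1 ∈ S <;> by_cases hPj : j + 1 ∈ S
          · have h1 := hpr_lt i hPi
            have h2 := hpr_lt j hPj
            exact prk_inj S hPi hPj (by omega)
          · rw [if_pos hPi, if_neg hPj] at he
            have h2 := hcr_le j hj
            by_cases h : crk S j = 0 <;> simp only [h, if_true, if_false] at he <;> omega
          · rw [if_neg hPi, if_pos hPj] at he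
            have h2 := hcr_le i hi
            by_cases h : crk S i = 0 <;> simp only [h, if_true, if_false] at he <;> omega
          · rw [if_neg hPi, if_neg hPj] at he
            have h1 := hcr_le i hi
            have h2 := hcr_le j hj
            refine crk_inj S hPi hPj ?_
            by_cases ha : crk S i = 0 <;> by_cases hb : crk S j = 0 <;>
              simp only [ha, hb, if_true, if_false] at he <;> omega
        have hiffD : ∀ i, i + 2 ≤ n - 1 →
            ((fD n S i < fD n S (i+1) ∧ fD n S (i+2) < fD n S (i+1)) ↔ i + 2 ∈ S) := by
          intro i hi
          by_cases hP : i + 2 ∈ S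
          · simp only [hP, iff_true]
            have hie : i + 2 = n - 1 := hOnly _ hP
            have hPi : i + 1 ∉ S := fun h => hAdj (i+1) h hP
            have hPi2 : i + 3 ∉ S := hAdj (i+2) hP
            have hc1 : 1 ≤ crk S i := hcr_pos i (by omega)
            have hc2 : 1 ≤ crk S (i+2) := hcr_pos (i+2) (by omega)
            have hb1 : crk S i ≤ crk S n - 1 := hcr_le i (by omega)
            have hb2 : crk S (i+2) ≤ crk S n - 1 := hcr_le (i+2) (by omega)
            simp only [fD, show i+1+1 = i+2 from rfl, show i+2+1 = i+3 from rfl,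
              if_pos hP, if_neg hPi, if_neg hPi2,
              if_neg (by omega : ¬ crk S i = 0), if_neg (by omega : ¬ crk S (i+2) = 0)]
            omega
          · simp only [hP, iff_false]
            rintro ⟨hlt, -⟩
            have hrc1 : 1 ≤ crk S (i+1) := hcr_pos (i+1) (by omega)
            have hrc2 : crk S (i+1) ≤ crk S n - 2 := hcand (i+1) (by omega) hP
            simp only [fD, show i+1+1 = i+2 from rfl, if_neg hP,
              if_neg (by omega : ¬ crk S (i+1) = 0)] at hlt
            by_cases hPi : i + 1 ∈ S
            · have : i + 1 = n - 1 := hOnly _ hPi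
              omega
            · rw [if_neg hPi] at hlt
              have hs := crk_succ_not hPi
              by_cases h : crk S i = 0 <;> simp only [h, if_true, if_false] at hlt <;> omega
        refine main (fB n S) (fD n S) hfnB hfnD hinjB hinjD hiffB hiffD ?_
        intro i hi
        simp only [fB, fD]
        by_cases hP : i + 1 ∈ S
        · have h1 := hpr_lt i hP
          simp only [if_pos hP]
          omega
        · simp only [if_neg hP]
          have h1 := hcr_le i hi
          by_cases hb : crk S i = crk S n - 1
          · rw [if_pos hb, if_neg (show ¬ crk S i = 0 by omega)]
            omega
          · rw [if_neg hb]
            by_cases ha : crk S i = 0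
            · rw [if_pos ha]; omega
            · rw [if_neg ha]; omega
      · -- k = 1, peak ≤ n - 2 : use pair (A, C)
        have hfnC : ∀ i, i < n → fC n S i < n := by
          intro i hi
          simp only [fC]
          by_cases hP : i + 1 ∈ S
          · rw [if_pos hP]; omega
          · rw [if_neg hP]
            by_cases h : crk S i = crk S n - 1 <;> simp only [h, if_true, if_false] <;> omega
        have hinjC : ∀ i j, i < n → j < n → fC n S i = fC n S j → i = j := by
          intro i j hi hj he
          simp only [fC] at he
          by_cases hPi : i + 1 ∈ S <;> by_cases hPj : j + 1 ∈ S
          · have h1 := hpr_lt i hPi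
            have h2 := hpr_lt j hPj
            exact prk_inj S hPi hPj (by omega)
          · rw [if_pos hPi, if_neg hPj] at he
            have h2 := hcr_le j hj
            by_cases h : crk S j = crk S n - 1 <;> simp only [h, if_true, if_false] at he <;>
              omega
          · rw [if_neg hPi, if_pos hPj] at he
            have h2 := hcr_le i hi
            by_cases h : crk S i = crk S n - 1 <;> simp only [h, if_true, if_false] at he <;>
              omega
          · rw [if_neg hPi, if_neg hPj] at he
            have h1 := hcr_le i hi
            have h2 := hcr_le j hj
            refine crk_inj S hPi hPj ?_
            by_cases ha : crk S i = crk S n - 1 <;> by_cases hb : crk S j = crk S n - 1 <;>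
              simp only [ha, hb, if_true, if_false] at he <;> omega
        have hiffC : ∀ i, i + 2 ≤ n - 1 →
            ((fC n S i < fC n S (i+1) ∧ fC n S (i+2) < fC n S (i+1)) ↔ i + 2 ∈ S) := by
          intro i hi
          by_cases hP : i + 2 ∈ S
          · simp only [hP, iff_true]
            have hPi : i + 1 ∉ S := fun h => hAdj (i+1) h hP
            have hPi2 : i + 3 ∉ S := hAdj (i+2) hP
            have hne2 : i + 2 ≠ n - 1 := fun h => hln (h ▸ hP)
            have hb2 : crk S (i+2) ≤ crk S n - 2 := hcand (i+2) (by omega) hPi2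
            have hb1 : crk S i ≤ crk S n - 2 :=
              le_trans (crk_mono S (by omega : i ≤ i + 2)) hb2
            simp only [fC, show i+1+1 = i+2 from rfl, show i+2+1 = i+3 from rfl,
              if_pos hP, if_neg hPi, if_neg hPi2,
              if_neg (by omega : ¬ crk S i = crk S n - 1),
              if_neg (by omega : ¬ crk S (i+2) = crk S n - 1)]
            omega
          · simp only [hP, iff_false]
            rintro ⟨hlt, -⟩
            have hrc1 : 1 ≤ crk S (i+1) := hcr_pos (i+1) (by omega)
            have hrc2 : crk S (i+1) ≤ crk S n - 2 := hcand (i+1) (by omega) hP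
            simp only [fC, show i+1+1 = i+2 from rfl, if_neg hP,
              if_neg (by omega : ¬ crk S (i+1) = crk S n - 1)] at hlt
            by_cases hPi : i + 1 ∈ S
            · rw [if_pos hPi] at hlt; omega
            · rw [if_neg hPi] at hlt
              have hs := crk_succ_not hPi
              rw [if_neg (by omega : ¬ crk S i = crk S n - 1)] at hlt
              omega
        refine main (fA n S) (fC n S) hfnA hfnC hinjA hinjC hiffA hiffC ?_
        intro i hi
        simp only [fA, fC]
        by_cases hP : i + 1 ∈ S
        · have h1 := hpr_lt i hP
          have hz : prk S i = 0 := by omega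
          simp only [if_pos hP, hz, hk1]
          omega
        · simp only [if_neg hP]
          have h1 := hcr_le i hi
          by_cases hb : crk S i = crk S n - 1 <;> simp only [hb, if_true, if_false] <;> omega
    · -- k ≠ 1 : use pair (A, B)
      refine main (fA n S) (fB n S) hfnA hfnB hinjA hinjB hiffA hiffB ?_
      intro i hi
      simp only [fA, fB]
      by_cases hP : i + 1 ∈ S
      · have h1 := hpr_lt i hP
        simp only [if_pos hP]
        have hmi : (prk S i + 1) % prk S n = prk S i + 1 ∨
            ((prk S i + 1) % prk S n = 0 ∧ prk S i + 1 = prk S n) := by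
          rcases eq_or_ne (prk S i + 1) (prk S n) with h | h
          · right; exact ⟨by rw [h, Nat.mod_self], h⟩
          · left; exact Nat.mod_eq_of_lt (by omega)
        rcases hmi with h | h <;> omega
      · simp only [if_neg hP]
        have h1 := hcr_le i hi
        by_cases hb : crk S i = crk S n - 1 <;> simp only [hb, if_true, if_false] <;> omega
  · rintro d ⟨σ, ρ, -, -, rfl⟩
    exact le_trans (Finset.card_filter_le _ _)
      (le_of_eq (by rw [Finset.card_univ, Fintype.card_fin]))
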